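/- Assume the Y structure with P(X=x, D=d) > 0 for all x, d ∈ {0,1}. Define RD(d) := P(Y=1 | X=1, D=d) − P(Y=1 | X=0, D=d) and w_d := var(X | D=d)·P(D=d) / [ var(X | D=1)·P(D=1) + var(X | D=0)·P(D=0) ] for d ∈ {0,1}. Then w_1·RD(1) + w_0·RD(0) = h · ( p_{D=1|1} − p_{D=1|0} )^2 · P(X=1)·P(X=0)·P(Y=1)·P(Y=0) / φ, where h := − [ P(X=1)·( p_{C=1|11} − p_{C=1|10} ) + P(X=0)·( p_{C=1|01} − p_{C=1|00} ) ] · [ P(Y=1)·( p_{C=1|11} − p_{C=1|01} ) + P(Y=0)·( p_{C=1|10} − p_{C=1|00} ) ] and φ := P(D=0)·P(D=1, X=1)·P(D=1, X=0) + P(D=1)·P(D=0, X=1)·P(D=0, X=0). -/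

import Mathlib

open MeasureTheory ProbabilityTheory

variable {Ω : Type*} [MeasurableSpace Ω]

/-- The event that the random variable `X` takes the value `x`. -/
def ev (X : Ω → ℝ) (x : ℝ) : Set Ω := {ω | X ω = x}

/-- The probability of an event, as a real number. -/
noncomputable def pr (P : Measure Ω) (s : Set Ω) : ℝ := (P s).toReal

/-- The conditional probability `P(s | t)`, as a real number. -/
noncomputable def cpr (P : Measure Ω) (s t : Set Ω) : ℝ := pr (P[|t]) s

/-- The covariance of two real-valued random variables. -/
noncomputable def rcov (P : Measure Ω) (X Y : Ω → ℝ) : ℝ :=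
  ∫ ω, (X ω - ∫ ω', X ω' ∂P) * (Y ω - ∫ ω', Y ω' ∂P) ∂P

/-- The conditional covariance of two real-valued random variables given an event. -/
noncomputable def covCond (P : Measure Ω) (X Y : Ω → ℝ) (t : Set Ω) : ℝ :=
  rcov (P[|t]) X Y

/-- The conditional variance of a real-valued random variable given an event. -/
noncomputable def varCond (P : Measure Ω) (X : Ω → ℝ) (t : Set Ω) : ℝ :=
  covCond P X X t

/-- A measurable `{0,1}`-valued random variable. -/
def IsBin (X : Ω → ℝ) : Prop := Measurable X ∧ ∀ ω, X ω = 0 ∨ X ω = 1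

/-- The stratum-specific risk difference of `Y` comparing `X = 1` with `X = 0` within the
stratum `Z = z`. -/
noncomputable def strataRD (P : Measure Ω) (X Y Z : Ω → ℝ) (z : ℝ) : ℝ :=
  cpr P (ev Y 1) (ev X 1 ∩ ev Z z) - cpr P (ev Y 1) (ev X 0 ∩ ev Z z)

/-- The linear-regression weight of the stratum `Z = z`, proportional to
`var(X | Z = z) * P(Z = z)`. -/
noncomputable def strataW (P : Measure Ω) (X Z : Ω → ℝ) (z : ℝ) : ℝ :=
  varCond P X (ev Z z) * pr P (ev Z z) /
    (varCond P X (ev Z 1) * pr P (ev Z 1) + varCond P X (ev Z 0) * pr P (ev Z 0))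

/-! ### Auxiliary lemmas -/

lemma yb_meas {X : Ω → ℝ} (hX : IsBin X) (x : ℝ) : MeasurableSet (ev X x) :=
  hX.1 (measurableSet_singleton x)

lemma yb_ev_zero {X : Ω → ℝ} (hX : IsBin X) : ev X 0 = (ev X 1)ᶜ := by
  ext ω; rcases hX.2 ω with h | h <;> simp [ev, h]

lemma yb_pr_nonneg (P : Measure Ω) (s : Set Ω) : 0 ≤ pr P s := ENNReal.toReal_nonneg

lemma yb_pr_mono (P : Measure Ω) [IsFiniteMeasure P] {s t : Set Ω} (h : s ⊆ t) :
    pr P s ≤ pr P t := ENNReal.toReal_mono (measure_ne_top P t) (measure_mono h)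

lemma yb_ne_zero (P : Measure Ω) [IsFiniteMeasure P] {t : Set Ω} (h : 0 < pr P t) :
    P t ≠ 0 := by
  intro h0
  rw [pr, h0] at h
  simp at h

lemma yb_pr_zero (P : Measure Ω) [IsFiniteMeasure P] {s t : Set Ω} (h : s ⊆ t)
    (ht : pr P t = 0) : pr P s = 0 := by
  have h1 : P t = 0 := by
    have h2 := measure_ne_top P t
    rw [pr, ENNReal.toReal_eq_zero_iff] at ht
    tauto
  simp [pr, measure_mono_null h h1]

lemma yb_pr_split (P : Measure Ω) [IsFiniteMeasure P] (A : Set Ω) {B : Set Ω}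
    (hB : MeasurableSet B) : pr P A = pr P (A ∩ B) + pr P (A ∩ Bᶜ) := by
  have h : A ∩ Bᶜ = A \ B := (Set.diff_eq A B).symm
  rw [h]
  unfold pr
  rw [← ENNReal.toReal_add (measure_ne_top _ _) (measure_ne_top _ _),
    measure_inter_add_diff A hB]

lemma yb_cpr_eq (P : Measure Ω) {t : Set Ω} (ht : MeasurableSet t) (s : Set Ω) :
    cpr P s t = pr P (t ∩ s) / pr P t := by
  unfold cpr pr
  rw [cond_apply ht, ENNReal.toReal_mul, ENNReal.toReal_inv, div_eq_inv_mul]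

lemma yb_cpr_nonneg (P : Measure Ω) (s t : Set Ω) : 0 ≤ cpr P s t :=
  ENNReal.toReal_nonneg

lemma yb_cpr_pair_le (P : Measure Ω) [IsFiniteMeasure P] {D : Ω → ℝ} (hD : IsBin D)
    {t : Set Ω} (ht : MeasurableSet t) :
    cpr P (ev D 1) t + cpr P (ev D 0) t ≤ 1 := by
  rw [yb_cpr_eq P ht, yb_cpr_eq P ht, ← add_div]
  have hsplit : pr P t = pr P (t ∩ ev D 1) + pr P (t ∩ ev D 0) := by
    rw [yb_pr_split P t (yb_meas hD 1), yb_ev_zero hD]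
  rw [← hsplit]
  rcases eq_or_ne (pr P t) 0 with h | h
  · rw [h, div_zero]; norm_num
  · rw [div_self h]

lemma yb_cpr_compl (P : Measure Ω) [IsFiniteMeasure P] {D : Ω → ℝ} (hD : IsBin D)
    {t : Set Ω} (ht : MeasurableSet t) (hpos : pr P t ≠ 0) :
    cpr P (ev D 0) t = 1 - cpr P (ev D 1) t := by
  rw [yb_cpr_eq P ht, yb_cpr_eq P ht]
  have hsplit : pr P t = pr P (t ∩ ev D 1) + pr P (t ∩ ev D 0) := by
    rw [yb_pr_split P t (yb_meas hD 1), yb_ev_zero hD]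
  field_simp
  linarith

lemma yb_pr_compl (P : Measure Ω) [IsProbabilityMeasure P] {s : Set Ω}
    (hs : MeasurableSet s) : pr P sᶜ = 1 - pr P s := by
  have h : P s + P sᶜ = 1 := by rw [measure_add_measure_compl hs, measure_univ]
  have h2 : pr P s + pr P sᶜ = 1 := by
    unfold pr
    rw [← ENNReal.toReal_add (measure_ne_top _ _) (measure_ne_top _ _), h]
    simp
  linarith

lemma yb_varCond (P : Measure Ω) [IsFiniteMeasure P] {X : Ω → ℝ} (hX : IsBin X)
    {t : Set Ω} (hpt : P t ≠ 0) :
    varCond P X t = cpr P (ev X 1) t * (1 - cpr P (ev X 1) t) := by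
  haveI : IsProbabilityMeasure (P[|t]) := cond_isProbabilityMeasure hpt
  have hmeas : MeasurableSet (ev X 1) := yb_meas hX 1
  have hXrep : X = (ev X 1).indicator (fun _ => (1 : ℝ)) := by
    funext ω
    rcases hX.2 ω with h | h <;> simp [Set.indicator_apply, ev, h]
  have hint : ∫ ω, X ω ∂(P[|t]) = cpr P (ev X 1) t := by
    conv_lhs => rw [hXrep]
    rw [integral_indicator_const (1 : ℝ) hmeas]
    simp [cpr, pr, measureReal_def]
  have hXint : Integrable X (P[|t]) := by
    have h : Integrable ((ev X 1).indicator (fun _ => (1 : ℝ))) (P[|t]) :=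
      (integrable_const (1 : ℝ)).indicator hmeas
    rwa [← hXrep] at h
  simp only [varCond, covCond, rcov]
  rw [hint]
  have heq : ∀ ω, (X ω - cpr P (ev X 1) t) * (X ω - cpr P (ev X 1) t) =
      (1 - 2 * cpr P (ev X 1) t) * X ω + cpr P (ev X 1) t * cpr P (ev X 1) t := by
    intro ω
    rcases hX.2 ω with h | h <;> rw [h] <;> ring
  simp only [heq]
  rw [integral_add (hXint.const_mul _) (integrable_const _), integral_const_mul, hint,
    integral_const]
  simp only [probReal_univ, one_smul]
  ring

lemma yb_rearr (A B E F : Set Ω) : A ∩ B ∩ E ∩ F = A ∩ E ∩ F ∩ B := by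
  ext ω; simp only [Set.mem_inter_iff]; tauto

lemma yb_posXY (P : Measure Ω) [IsProbabilityMeasure P]
    (X Y C D : Ω → ℝ) (hX : IsBin X) (hY : IsBin Y) (hC : IsBin C) (hD : IsBin D)
    (hfact : ∀ x y γ d : ℝ, (x = 0 ∨ x = 1) → (y = 0 ∨ y = 1) → (γ = 0 ∨ γ = 1) →
      (d = 0 ∨ d = 1) →
      pr P (ev X x ∩ ev Y y ∩ ev C γ ∩ ev D d) =
        pr P (ev X x) * pr P (ev Y y) * cpr P (ev C γ) (ev X x ∩ ev Y y) *
          cpr P (ev D d) (ev C γ))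
    (x y₁ y₂ : ℝ) (hx : x = 0 ∨ x = 1) (hy₁ : y₁ = 0 ∨ y₁ = 1) (hy₂ : y₂ = 0 ∨ y₂ = 1)
    (hcompl : ev Y y₂ = (ev Y y₁)ᶜ)
    (hax : 0 < pr P (ev X x)) (hby₂ : pr P (ev Y y₂) < 1) :
    0 < pr P (ev X x ∩ ev Y y₁) := by
  rcases lt_or_ge 0 (pr P (ev X x ∩ ev Y y₁)) with h | h
  · exact h
  exfalso
  have h0 : pr P (ev X x ∩ ev Y y₁) = 0 := le_antisymm h (yb_pr_nonneg _ _)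
  have hsplit : pr P (ev X x) = pr P (ev X x ∩ ev Y y₁) + pr P (ev X x ∩ ev Y y₂) := by
    rw [hcompl]
    exact yb_pr_split P _ (yb_meas hY y₁)
  have h2 : pr P (ev X x ∩ ev Y y₂) = pr P (ev X x) := by linarith
  have hsC : pr P (ev X x ∩ ev Y y₂) =
      pr P (ev X x ∩ ev Y y₂ ∩ ev C 1) + pr P (ev X x ∩ ev Y y₂ ∩ ev C 0) := by
    rw [yb_pr_split P _ (yb_meas hC 1), yb_ev_zero hC]
  have hsD : ∀ B : Set Ω, pr P B = pr P (B ∩ ev D 1) + pr P (B ∩ ev D 0) := by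
    intro B
    rw [yb_pr_split P B (yb_meas hD 1), yb_ev_zero hD]
  have key0 : pr P (ev X x ∩ ev Y y₂) = pr P (ev X x) * pr P (ev Y y₂) *
      (cpr P (ev C 1) (ev X x ∩ ev Y y₂) *
        (cpr P (ev D 1) (ev C 1) + cpr P (ev D 0) (ev C 1)) +
       cpr P (ev C 0) (ev X x ∩ ev Y y₂) *
        (cpr P (ev D 1) (ev C 0) + cpr P (ev D 0) (ev C 0))) := by
    rw [hsC, hsD (ev X x ∩ ev Y y₂ ∩ ev C 1), hsD (ev X x ∩ ev Y y₂ ∩ ev C 0),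
      hfact x y₂ 1 1 hx hy₂ (Or.inr rfl) (Or.inr rfl),
      hfact x y₂ 1 0 hx hy₂ (Or.inr rfl) (Or.inl rfl),
      hfact x y₂ 0 1 hx hy₂ (Or.inl rfl) (Or.inr rfl),
      hfact x y₂ 0 0 hx hy₂ (Or.inl rfl) (Or.inl rfl)]
    ring
  have b1 := yb_cpr_pair_le P hD (yb_meas hC 1)
  have b0 := yb_cpr_pair_le P hD (yb_meas hC 0)
  have cle := yb_cpr_pair_le P hC ((yb_meas hX x).inter (yb_meas hY y₂))
  have c1n := yb_cpr_nonneg P (ev C 1) (ev X x ∩ ev Y y₂)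
  have c0n := yb_cpr_nonneg P (ev C 0) (ev X x ∩ ev Y y₂)
  have q11n := yb_cpr_nonneg P (ev D 1) (ev C 1)
  have q01n := yb_cpr_nonneg P (ev D 0) (ev C 1)
  have q10n := yb_cpr_nonneg P (ev D 1) (ev C 0)
  have q00n := yb_cpr_nonneg P (ev D 0) (ev C 0)
  have hbn : 0 ≤ pr P (ev Y y₂) := yb_pr_nonneg _ _
  have hs1 : cpr P (ev C 1) (ev X x ∩ ev Y y₂) *
        (cpr P (ev D 1) (ev C 1) + cpr P (ev D 0) (ev C 1)) +
      cpr P (ev C 0) (ev X x ∩ ev Y y₂) *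
        (cpr P (ev D 1) (ev C 0) + cpr P (ev D 0) (ev C 0)) ≤ 1 := by
    nlinarith [mul_nonneg c1n (sub_nonneg.2 b1), mul_nonneg c0n (sub_nonneg.2 b0)]
  have hs0 : 0 ≤ cpr P (ev C 1) (ev X x ∩ ev Y y₂) *
        (cpr P (ev D 1) (ev C 1) + cpr P (ev D 0) (ev C 1)) +
      cpr P (ev C 0) (ev X x ∩ ev Y y₂) *
        (cpr P (ev D 1) (ev C 0) + cpr P (ev D 0) (ev C 0)) :=
    add_nonneg (mul_nonneg c1n (add_nonneg q11n q01n)) (mul_nonneg c0n (add_nonneg q10n q00n))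
  have hle : pr P (ev X x) * pr P (ev Y y₂) *
      (cpr P (ev C 1) (ev X x ∩ ev Y y₂) *
        (cpr P (ev D 1) (ev C 1) + cpr P (ev D 0) (ev C 1)) +
       cpr P (ev C 0) (ev X x ∩ ev Y y₂) *
        (cpr P (ev D 1) (ev C 0) + cpr P (ev D 0) (ev C 0))) ≤
      pr P (ev X x) * pr P (ev Y y₂) := by
    nlinarith [mul_nonneg hax.le hbn, hs1, hs0]
  have hlt : pr P (ev X x) * pr P (ev Y y₂) < pr P (ev X x) := by
    nlinarith [mul_pos hax (sub_pos.2 hby₂)]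
  linarith [key0, h2, hle, hlt]

lemma yb_algebra (a b c11 c10 c01 c00 q1 q0 N11 N01 N10 N00 T11 T01 T10 T00 : ℝ)
    (eN11 : N11 = a * (b * (c11 * q1 + (1 - c11) * q0) + (1 - b) * (c10 * q1 + (1 - c10) * q0)))
    (eN01 : N01 = (1 - a) * (b * (c01 * q1 + (1 - c01) * q0) + (1 - b) * (c00 * q1 + (1 - c00) * q0)))
    (eN10 : N10 = a * (b * (c11 * (1 - q1) + (1 - c11) * (1 - q0)) + (1 - b) * (c10 * (1 - q1) + (1 - c10) * (1 - q0))))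
    (eN00 : N00 = (1 - a) * (b * (c01 * (1 - q1) + (1 - c01) * (1 - q0)) + (1 - b) * (c00 * (1 - q1) + (1 - c00) * (1 - q0))))
    (eT11 : T11 = a * b * (c11 * q1 + (1 - c11) * q0))
    (eT01 : T01 = (1 - a) * b * (c01 * q1 + (1 - c01) * q0))
    (eT10 : T10 = a * b * (c11 * (1 - q1) + (1 - c11) * (1 - q0)))
    (eT00 : T00 = (1 - a) * b * (c01 * (1 - q1) + (1 - c01) * (1 - q0)))
    (pN11 : 0 < N11) (pN01 : 0 < N01) (pN10 : 0 < N10) (pN00 : 0 < N00) :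
    N11 / (N11 + N01) * (1 - N11 / (N11 + N01)) * (N11 + N01) /
        (N11 / (N11 + N01) * (1 - N11 / (N11 + N01)) * (N11 + N01) +
          N10 / (N10 + N00) * (1 - N10 / (N10 + N00)) * (N10 + N00)) *
        (T11 / N11 - T01 / N01) +
      N10 / (N10 + N00) * (1 - N10 / (N10 + N00)) * (N10 + N00) /
        (N11 / (N11 + N01) * (1 - N11 / (N11 + N01)) * (N11 + N01) +
          N10 / (N10 + N00) * (1 - N10 / (N10 + N00)) * (N10 + N00)) *
        (T10 / N10 - T00 / N00) =
      -((a * (c11 - c10) + (1 - a) * (c01 - c00)) *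
          (b * (c11 - c01) + (1 - b) * (c10 - c00))) *
        (q1 - q0) ^ 2 * a * (1 - a) * b * (1 - b) /
        ((N10 + N00) * N11 * N01 + (N11 + N01) * N10 * N00) := by
  have hpd1 : 0 < N11 + N01 := by linarith
  have hpd0 : 0 < N10 + N00 := by linarith
  have hphi : 0 < (N10 + N00) * N11 * N01 + (N11 + N01) * N10 * N00 := by positivity
  have hV1 : N11 / (N11 + N01) * (1 - N11 / (N11 + N01)) * (N11 + N01) =
      N11 * N01 / (N11 + N01) := by
    field_simp
    ring
  have hV0 : N10 / (N10 + N00) * (1 - N10 / (N10 + N00)) * (N10 + N00) =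
      N10 * N00 / (N10 + N00) := by
    field_simp
    ring
  rw [hV1, hV0]
  have hphi' : (N10 + N00) * N11 * N01 + (N11 + N01) * N10 * N00 ≠ 0 := ne_of_gt hphi
  have hWeq : N11 * N01 / (N11 + N01) + N10 * N00 / (N10 + N00) =
      ((N10 + N00) * N11 * N01 + (N11 + N01) * N10 * N00) / ((N11 + N01) * (N10 + N00)) := by
    field_simp
  rw [hWeq]
  have e1 : N11 * N01 / (N11 + N01) /
      (((N10 + N00) * N11 * N01 + (N11 + N01) * N10 * N00) / ((N11 + N01) * (N10 + N00))) =
      N11 * N01 * (N10 + N00) / ((N10 + N00) * N11 * N01 + (N11 + N01) * N10 * N00) := by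
    rw [div_div_div_eq]
    rw [div_eq_div_iff (by positivity) (by positivity)]
    ring
  have e0 : N10 * N00 / (N10 + N00) /
      (((N10 + N00) * N11 * N01 + (N11 + N01) * N10 * N00) / ((N11 + N01) * (N10 + N00))) =
      N10 * N00 * (N11 + N01) / ((N10 + N00) * N11 * N01 + (N11 + N01) * N10 * N00) := by
    rw [div_div_div_eq]
    rw [div_eq_div_iff (by positivity) (by positivity)]
    ring
  rw [e1, e0]
  have hR1 : N11 * N01 * (N10 + N00) / ((N10 + N00) * N11 * N01 + (N11 + N01) * N10 * N00) *
      (T11 / N11 - T01 / N01) =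
      (N10 + N00) * (T11 * N01 - T01 * N11) /
        ((N10 + N00) * N11 * N01 + (N11 + N01) * N10 * N00) := by
    rw [div_mul_eq_mul_div, div_eq_div_iff hphi' hphi']
    field_simp
  have hR0 : N10 * N00 * (N11 + N01) / ((N10 + N00) * N11 * N01 + (N11 + N01) * N10 * N00) *
      (T10 / N10 - T00 / N00) =
      (N11 + N01) * (T10 * N00 - T00 * N10) /
        ((N10 + N00) * N11 * N01 + (N11 + N01) * N10 * N00) := by
    rw [div_mul_eq_mul_div, div_eq_div_iff hphi' hphi']
    field_simp
  rw [hR1, hR0, ← add_div]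
  have hkey : (N10 + N00) * (T11 * N01 - T01 * N11) + (N11 + N01) * (T10 * N00 - T00 * N10) =
      -((a * (c11 - c10) + (1 - a) * (c01 - c00)) *
          (b * (c11 - c01) + (1 - b) * (c10 - c00))) *
        (q1 - q0) ^ 2 * a * (1 - a) * b * (1 - b) := by
    rw [eN11, eN01, eN10, eN00, eT11, eT01, eT10, eT00]
    ring
  linear_combination hkey / ((N10 + N00) * N11 * N01 + (N11 + N01) * N10 * N00)

/-- Y-bias due to linear regression adjustment for `D`. -/
theorem Y_bias_lm (P : Measure Ω) [IsProbabilityMeasure P]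
    (X Y C D : Ω → ℝ) (hX : IsBin X) (hY : IsBin Y) (hC : IsBin C) (hD : IsBin D)
    (hX1 : 0 < pr P (ev X 1)) (hX1' : pr P (ev X 1) < 1)
    (hY1 : 0 < pr P (ev Y 1)) (hY1' : pr P (ev Y 1) < 1)
    (hfact : ∀ x y γ d : ℝ, (x = 0 ∨ x = 1) → (y = 0 ∨ y = 1) → (γ = 0 ∨ γ = 1) →
      (d = 0 ∨ d = 1) →
      pr P (ev X x ∩ ev Y y ∩ ev C γ ∩ ev D d) =
        pr P (ev X x) * pr P (ev Y y) * cpr P (ev C γ) (ev X x ∩ ev Y y) *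
          cpr P (ev D d) (ev C γ))
    (hXD : ∀ x d : ℝ, (x = 0 ∨ x = 1) → (d = 0 ∨ d = 1) → 0 < pr P (ev X x ∩ ev D d)) :
    strataW P X D 1 * strataRD P X Y D 1 + strataW P X D 0 * strataRD P X Y D 0 =
      -((pr P (ev X 1) *
            (cpr P (ev C 1) (ev X 1 ∩ ev Y 1) - cpr P (ev C 1) (ev X 1 ∩ ev Y 0)) +
          pr P (ev X 0) *
            (cpr P (ev C 1) (ev X 0 ∩ ev Y 1) - cpr P (ev C 1) (ev X 0 ∩ ev Y 0))) *
        (pr P (ev Y 1) *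
            (cpr P (ev C 1) (ev X 1 ∩ ev Y 1) - cpr P (ev C 1) (ev X 0 ∩ ev Y 1)) +
          pr P (ev Y 0) *
            (cpr P (ev C 1) (ev X 1 ∩ ev Y 0) - cpr P (ev C 1) (ev X 0 ∩ ev Y 0)))) *
        (cpr P (ev D 1) (ev C 1) - cpr P (ev D 1) (ev C 0)) ^ 2 *
        pr P (ev X 1) * pr P (ev X 0) * pr P (ev Y 1) * pr P (ev Y 0) /
        (pr P (ev D 0) * pr P (ev D 1 ∩ ev X 1) * pr P (ev D 1 ∩ ev X 0) +
          pr P (ev D 1) * pr P (ev D 0 ∩ ev X 1) * pr P (ev D 0 ∩ ev X 0)) := by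
  have haX0 : pr P (ev X 0) = 1 - pr P (ev X 1) := by
    rw [yb_ev_zero hX, yb_pr_compl P (yb_meas hX 1)]
  have haY0 : pr P (ev Y 0) = 1 - pr P (ev Y 1) := by
    rw [yb_ev_zero hY, yb_pr_compl P (yb_meas hY 1)]
  have hX0 : 0 < pr P (ev X 0) := by rw [haX0]; linarith
  have hY0 : 0 < pr P (ev Y 0) := by rw [haY0]; linarith
  have hY0' : pr P (ev Y 0) < 1 := by rw [haY0]; linarith
  -- positivity of the cells (X = x, Y = y)
  have hXY : ∀ x y : ℝ, (x = 0 ∨ x = 1) → (y = 0 ∨ y = 1) →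
      0 < pr P (ev X x ∩ ev Y y) := by
    intro x y hx hy
    have hax : 0 < pr P (ev X x) := by
      rcases hx with h | h <;> subst h
      · exact hX0
      · exact hX1
    rcases hy with h | h <;> subst h
    · exact yb_posXY P X Y C D hX hY hC hD hfact x 0 1 hx (Or.inl rfl) (Or.inr rfl)
        (by rw [yb_ev_zero hY, compl_compl]) hax hY1'
    · exact yb_posXY P X Y C D hX hY hC hD hfact x 1 0 hx (Or.inr rfl) (Or.inl rfl)
        (yb_ev_zero hY) hax hY0'
  have hc0 : ∀ x y : ℝ, (x = 0 ∨ x = 1) → (y = 0 ∨ y = 1) →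
      cpr P (ev C 0) (ev X x ∩ ev Y y) = 1 - cpr P (ev C 1) (ev X x ∩ ev Y y) := by
    intro x y hx hy
    exact yb_cpr_compl P hC ((yb_meas hX x).inter (yb_meas hY y)) (ne_of_gt (hXY x y hx hy))
  -- the factorized atom probabilities
  have hpi11 : ∀ x y : ℝ, (x = 0 ∨ x = 1) → (y = 0 ∨ y = 1) →
      pr P (ev X x ∩ ev Y y ∩ ev C 1 ∩ ev D 1) =
        pr P (ev X x) * pr P (ev Y y) *
          (cpr P (ev C 1) (ev X x ∩ ev Y y) * cpr P (ev D 1) (ev C 1)) := by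
    intro x y hx hy
    rw [hfact x y 1 1 hx hy (Or.inr rfl) (Or.inr rfl)]
    ring
  have hpi01 : ∀ x y : ℝ, (x = 0 ∨ x = 1) → (y = 0 ∨ y = 1) →
      pr P (ev X x ∩ ev Y y ∩ ev C 0 ∩ ev D 1) =
        pr P (ev X x) * pr P (ev Y y) *
          ((1 - cpr P (ev C 1) (ev X x ∩ ev Y y)) * cpr P (ev D 1) (ev C 0)) := by
    intro x y hx hy
    rw [hfact x y 0 1 hx hy (Or.inl rfl) (Or.inr rfl), hc0 x y hx hy]
    ring
  have hpi10 : ∀ x y : ℝ, (x = 0 ∨ x = 1) → (y = 0 ∨ y = 1) →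
      pr P (ev X x ∩ ev Y y ∩ ev C 1 ∩ ev D 0) =
        pr P (ev X x) * pr P (ev Y y) *
          (cpr P (ev C 1) (ev X x ∩ ev Y y) * (1 - cpr P (ev D 1) (ev C 1))) := by
    intro x y hx hy
    rw [hfact x y 1 0 hx hy (Or.inr rfl) (Or.inl rfl)]
    rcases eq_or_lt_of_le (yb_pr_nonneg P (ev C 1)) with hz | hz
    · have h1 : cpr P (ev C 1) (ev X x ∩ ev Y y) = 0 := by
        rw [yb_cpr_eq P ((yb_meas hX x).inter (yb_meas hY y)),
          yb_pr_zero P Set.inter_subset_right hz.symm, zero_div]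
      rw [h1]
      ring
    · have h2 : cpr P (ev D 0) (ev C 1) = 1 - cpr P (ev D 1) (ev C 1) :=
        yb_cpr_compl P hD (yb_meas hC 1) (ne_of_gt hz)
      rw [h2]
      ring
  have hpi00 : ∀ x y : ℝ, (x = 0 ∨ x = 1) → (y = 0 ∨ y = 1) →
      pr P (ev X x ∩ ev Y y ∩ ev C 0 ∩ ev D 0) =
        pr P (ev X x) * pr P (ev Y y) *
          ((1 - cpr P (ev C 1) (ev X x ∩ ev Y y)) * (1 - cpr P (ev D 1) (ev C 0))) := by
    intro x y hx hy
    rw [hfact x y 0 0 hx hy (Or.inl rfl) (Or.inl rfl)]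
    rcases eq_or_lt_of_le (yb_pr_nonneg P (ev C 0)) with hz | hz
    · have h1 : cpr P (ev C 0) (ev X x ∩ ev Y y) = 0 := by
        rw [yb_cpr_eq P ((yb_meas hX x).inter (yb_meas hY y)),
          yb_pr_zero P Set.inter_subset_right hz.symm, zero_div]
      have h4 : 1 - cpr P (ev C 1) (ev X x ∩ ev Y y) = 0 := by
        rw [← hc0 x y hx hy]; exact h1
      rw [h1, h4]
      ring
    · have h2 : cpr P (ev D 0) (ev C 0) = 1 - cpr P (ev D 1) (ev C 0) :=
        yb_cpr_compl P hD (yb_meas hC 0) (ne_of_gt hz)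
      rw [h2, hc0 x y hx hy]
      ring
  -- marginal (X = x, D = d) probabilities
  have hN1 : ∀ x : ℝ, (x = 0 ∨ x = 1) →
      pr P (ev X x ∩ ev D 1) =
        pr P (ev X x) *
          (pr P (ev Y 1) *
            (cpr P (ev C 1) (ev X x ∩ ev Y 1) * cpr P (ev D 1) (ev C 1) +
             (1 - cpr P (ev C 1) (ev X x ∩ ev Y 1)) * cpr P (ev D 1) (ev C 0)) +
           pr P (ev Y 0) *
            (cpr P (ev C 1) (ev X x ∩ ev Y 0) * cpr P (ev D 1) (ev C 1) +
             (1 - cpr P (ev C 1) (ev X x ∩ ev Y 0)) * cpr P (ev D 1) (ev C 0))) := by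
    intro x hx
    rw [yb_pr_split P (ev X x ∩ ev D 1) (yb_meas hY 1), ← yb_ev_zero hY,
      yb_pr_split P (ev X x ∩ ev D 1 ∩ ev Y 1) (yb_meas hC 1), ← yb_ev_zero hC,
      yb_pr_split P (ev X x ∩ ev D 1 ∩ ev Y 0) (yb_meas hC 1), ← yb_ev_zero hC,
      yb_rearr (ev X x) (ev D 1) (ev Y 1) (ev C 1),
      yb_rearr (ev X x) (ev D 1) (ev Y 1) (ev C 0),
      yb_rearr (ev X x) (ev D 1) (ev Y 0) (ev C 1),
      yb_rearr (ev X x) (ev D 1) (ev Y 0) (ev C 0),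
      hpi11 x 1 hx (Or.inr rfl), hpi01 x 1 hx (Or.inr rfl),
      hpi11 x 0 hx (Or.inl rfl), hpi01 x 0 hx (Or.inl rfl)]
    ring
  have hN0 : ∀ x : ℝ, (x = 0 ∨ x = 1) →
      pr P (ev X x ∩ ev D 0) =
        pr P (ev X x) *
          (pr P (ev Y 1) *
            (cpr P (ev C 1) (ev X x ∩ ev Y 1) * (1 - cpr P (ev D 1) (ev C 1)) +
             (1 - cpr P (ev C 1) (ev X x ∩ ev Y 1)) * (1 - cpr P (ev D 1) (ev C 0))) +
           pr P (ev Y 0) *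
            (cpr P (ev C 1) (ev X x ∩ ev Y 0) * (1 - cpr P (ev D 1) (ev C 1)) +
             (1 - cpr P (ev C 1) (ev X x ∩ ev Y 0)) * (1 - cpr P (ev D 1) (ev C 0)))) := by
    intro x hx
    rw [yb_pr_split P (ev X x ∩ ev D 0) (yb_meas hY 1), ← yb_ev_zero hY,
      yb_pr_split P (ev X x ∩ ev D 0 ∩ ev Y 1) (yb_meas hC 1), ← yb_ev_zero hC,
      yb_pr_split P (ev X x ∩ ev D 0 ∩ ev Y 0) (yb_meas hC 1), ← yb_ev_zero hC,
      yb_rearr (ev X x) (ev D 0) (ev Y 1) (ev C 1),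
      yb_rearr (ev X x) (ev D 0) (ev Y 1) (ev C 0),
      yb_rearr (ev X x) (ev D 0) (ev Y 0) (ev C 1),
      yb_rearr (ev X x) (ev D 0) (ev Y 0) (ev C 0),
      hpi10 x 1 hx (Or.inr rfl), hpi00 x 1 hx (Or.inr rfl),
      hpi10 x 0 hx (Or.inl rfl), hpi00 x 0 hx (Or.inl rfl)]
    ring
  -- joint (X = x, D = d, Y = 1) probabilities
  have hT1 : ∀ x : ℝ, (x = 0 ∨ x = 1) →
      pr P (ev X x ∩ ev D 1 ∩ ev Y 1) =
        pr P (ev X x) * pr P (ev Y 1) *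
          (cpr P (ev C 1) (ev X x ∩ ev Y 1) * cpr P (ev D 1) (ev C 1) +
           (1 - cpr P (ev C 1) (ev X x ∩ ev Y 1)) * cpr P (ev D 1) (ev C 0)) := by
    intro x hx
    rw [yb_pr_split P (ev X x ∩ ev D 1 ∩ ev Y 1) (yb_meas hC 1), ← yb_ev_zero hC,
      yb_rearr (ev X x) (ev D 1) (ev Y 1) (ev C 1),
      yb_rearr (ev X x) (ev D 1) (ev Y 1) (ev C 0),
      hpi11 x 1 hx (Or.inr rfl), hpi01 x 1 hx (Or.inr rfl)]
    ring
  have hT0 : ∀ x : ℝ, (x = 0 ∨ x = 1) →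
      pr P (ev X x ∩ ev D 0 ∩ ev Y 1) =
        pr P (ev X x) * pr P (ev Y 1) *
          (cpr P (ev C 1) (ev X x ∩ ev Y 1) * (1 - cpr P (ev D 1) (ev C 1)) +
           (1 - cpr P (ev C 1) (ev X x ∩ ev Y 1)) * (1 - cpr P (ev D 1) (ev C 0))) := by
    intro x hx
    rw [yb_pr_split P (ev X x ∩ ev D 0 ∩ ev Y 1) (yb_meas hC 1), ← yb_ev_zero hC,
      yb_rearr (ev X x) (ev D 0) (ev Y 1) (ev C 1),
      yb_rearr (ev X x) (ev D 0) (ev Y 1) (ev C 0),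
      hpi10 x 1 hx (Or.inr rfl), hpi00 x 1 hx (Or.inr rfl)]
    ring
  -- marginal D probabilities
  have hpD : ∀ d : ℝ, (d = 0 ∨ d = 1) →
      pr P (ev D d) = pr P (ev X 1 ∩ ev D d) + pr P (ev X 0 ∩ ev D d) := by
    intro d hd
    rw [yb_pr_split P (ev D d) (yb_meas hX 1), ← yb_ev_zero hX,
      Set.inter_comm (ev D d) (ev X 1), Set.inter_comm (ev D d) (ev X 0)]
  have hpD1 : 0 < pr P (ev D 1) := by
    rw [hpD 1 (Or.inr rfl)]
    have := hXD 1 1 (Or.inr rfl) (Or.inr rfl)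
    have := yb_pr_nonneg P (ev X 0 ∩ ev D 1)
    linarith
  have hpD0 : 0 < pr P (ev D 0) := by
    rw [hpD 0 (Or.inl rfl)]
    have := hXD 1 0 (Or.inr rfl) (Or.inl rfl)
    have := yb_pr_nonneg P (ev X 0 ∩ ev D 0)
    linarith
  -- rewrite the goal into a purely algebraic statement
  simp only [strataW, strataRD]
  rw [yb_varCond P hX (yb_ne_zero P hpD1), yb_varCond P hX (yb_ne_zero P hpD0),
    yb_cpr_eq P (yb_meas hD 1) (ev X 1), yb_cpr_eq P (yb_meas hD 0) (ev X 1),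
    yb_cpr_eq P ((yb_meas hX 1).inter (yb_meas hD 1)) (ev Y 1),
    yb_cpr_eq P ((yb_meas hX 0).inter (yb_meas hD 1)) (ev Y 1),
    yb_cpr_eq P ((yb_meas hX 1).inter (yb_meas hD 0)) (ev Y 1),
    yb_cpr_eq P ((yb_meas hX 0).inter (yb_meas hD 0)) (ev Y 1),
    Set.inter_comm (ev D 1) (ev X 1), Set.inter_comm (ev D 1) (ev X 0),
    Set.inter_comm (ev D 0) (ev X 1), Set.inter_comm (ev D 0) (ev X 0),
    hpD 1 (Or.inr rfl), hpD 0 (Or.inl rfl), haX0, haY0]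
  -- the transformed equations for the atoms
  have eN11 := hN1 1 (Or.inr rfl)
  have eN01 := hN1 0 (Or.inl rfl)
  have eN10 := hN0 1 (Or.inr rfl)
  have eN00 := hN0 0 (Or.inl rfl)
  have eT11 := hT1 1 (Or.inr rfl)
  have eT01 := hT1 0 (Or.inl rfl)
  have eT10 := hT0 1 (Or.inr rfl)
  have eT00 := hT0 0 (Or.inl rfl)
  rw [haY0] at eN11 eN01 eN10 eN00
  rw [haX0] at eN01 eN00 eT01 eT00
  exact yb_algebra (pr P (ev X 1)) (pr P (ev Y 1))
    (cpr P (ev C 1) (ev X 1 ∩ ev Y 1)) (cpr P (ev C 1) (ev X 1 ∩ ev Y 0))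
    (cpr P (ev C 1) (ev X 0 ∩ ev Y 1)) (cpr P (ev C 1) (ev X 0 ∩ ev Y 0))
    (cpr P (ev D 1) (ev C 1)) (cpr P (ev D 1) (ev C 0))
    (pr P (ev X 1 ∩ ev D 1)) (pr P (ev X 0 ∩ ev D 1))
    (pr P (ev X 1 ∩ ev D 0)) (pr P (ev X 0 ∩ ev D 0))
    (pr P (ev X 1 ∩ ev D 1 ∩ ev Y 1)) (pr P (ev X 0 ∩ ev D 1 ∩ ev Y 1))
    (pr P (ev X 1 ∩ ev D 0 ∩ ev Y 1)) (pr P (ev X 0 ∩ ev D 0 ∩ ev Y 1))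
    eN11 eN01 eN10 eN00 eT11 eT01 eT10 eT00
    (hXD 1 1 (Or.inr rfl) (Or.inr rfl)) (hXD 0 1 (Or.inl rfl) (Or.inr rfl))
    (hXD 1 0 (Or.inr rfl) (Or.inl rfl)) (hXD 0 0 (Or.inl rfl) (Or.inl rfl))
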